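/- Let E be a real inner product space, x_c ∈ E, r > 0, and let η₁ > 0 and η₂ be real numbers with η₂ ≥ η₁·r + (‖x_c‖ + √r)². Set c = η₂ − η₁·r and V(x) = max(‖x‖², η₂ − η₁‖x − x_c‖²). Then c > 0; V(x) = c for every x on the boundary sphere ‖x − x_c‖ = √r; and V(y) ≥ c for every y in the closed ball ‖y − x_c‖ ≤ √r. (Hence V satisfies the level-set separation condition V(x) = c on ∂O with c ≤ min over the closure of O of V.) -/
import Mathlib


/-- Level-set separation of the NCLBF: with `c = η₂ - η₁ r`, one has `c > 0`,
`V(x) = c` on the boundary sphere of the unsafe ball, and `V ≥ c` on the closed unsafe ball. -/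
theorem nclbf_level_set_separation
    {E : Type*} [NormedAddCommGroup E] [InnerProductSpace ℝ E]
    (x_c : E) (r η₁ η₂ : ℝ) (hr : 0 < r) (hη₁ : 0 < η₁)
    (hη₂ : η₁ * r + (‖x_c‖ + Real.sqrt r) ^ 2 ≤ η₂)
    (c : ℝ) (hc : c = η₂ - η₁ * r)
    (V : E → ℝ) (hV : ∀ x, V x = max (‖x‖ ^ 2) (η₂ - η₁ * ‖x - x_c‖ ^ 2)) :
    0 < c ∧
    (∀ x : E, ‖x - x_c‖ = Real.sqrt r → V x = c) ∧
    (∀ y : E, ‖y - x_c‖ ≤ Real.sqrt r → c ≤ V y) := by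
  have hsq : 0 < Real.sqrt r := Real.sqrt_pos.mpr hr
  have hbig : (‖x_c‖ + Real.sqrt r) ^ 2 ≤ c := by rw [hc]; linarith
  have hpos : 0 < c := lt_of_lt_of_le (by positivity) hbig
  refine ⟨hpos, ?_, ?_⟩
  · intro x hx
    rw [hV]
    have h1 : ‖x‖ ≤ ‖x_c‖ + Real.sqrt r := by
      calc ‖x‖ = ‖x_c + (x - x_c)‖ := by rw [add_sub_cancel]
        _ ≤ ‖x_c‖ + ‖x - x_c‖ := norm_add_le _ _
        _ = ‖x_c‖ + Real.sqrt r := by rw [hx]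
    have h2 : ‖x‖ ^ 2 ≤ c := le_trans (by
      have := norm_nonneg x
      nlinarith) hbig
    have h3 : η₂ - η₁ * ‖x - x_c‖ ^ 2 = c := by
      rw [hx, Real.sq_sqrt hr.le, hc]
    rw [h3, max_eq_right h2]
  · intro y hy
    rw [hV]
    have h4 : ‖y - x_c‖ ^ 2 ≤ r := by
      nlinarith [norm_nonneg (y - x_c), Real.sq_sqrt hr.le]
    have : c ≤ η₂ - η₁ * ‖y - x_c‖ ^ 2 := by rw [hc]; nlinarith
    exact le_trans this (le_max_right _ _)
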